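/- The set of Lebesgue measurable everywhere surjective functions ℝ → ℝ is 𝔠-lineable: there exists a vector subspace M of ℝ^ℝ of dimension continuum such that every nonzero element of M is Lebesgue measurable and everywhere surjective. -/

import Mathlib

open MeasureTheory

/-- A function `f : ℝ → ℝ` is everywhere surjective if it maps every nonempty
open interval onto all of `ℝ`. -/
def EverywhereSurjective (f : ℝ → ℝ) : Prop :=
  ∀ a b : ℝ, a < b → f '' Set.Ioo a b = Set.univ

open Filter Real Set Topology Cardinal

noncomputable section
namespace ES4

def dg (k : ℕ) (x : ℝ) : ℤ := ⌊x * 2 ^ k⌋ % 2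

lemma dg_nonneg (k : ℕ) (x : ℝ) : 0 ≤ dg k x := Int.emod_nonneg _ (by norm_num)

lemma dg_le_one (k : ℕ) (x : ℝ) : dg k x ≤ 1 := by
  have := Int.emod_lt_of_pos (⌊x * 2 ^ k⌋) (b := 2) (by norm_num)
  unfold dg; omega

lemma measurable_dg (k : ℕ) : Measurable fun x : ℝ => ((dg k x : ℤ) : ℝ) := by
  have h1 : Measurable fun x : ℝ => ⌊x * 2 ^ k⌋ :=
    Int.measurable_floor.comp (measurable_id.mul_const _)
  exact (measurable_from_top (f := fun z : ℤ => ((z % 2 : ℤ) : ℝ))).comp h1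

def avg (n : ℕ) (x : ℝ) : ℝ := (∑ k ∈ Finset.range n, ((dg k x : ℤ) : ℝ)) / n

lemma measurable_avg (n : ℕ) : Measurable fun x => avg n x :=
  (Finset.measurable_sum _ fun k _ => measurable_dg k).div_const _

def F (x : ℝ) : ℝ := limsup (fun n => avg n x) atTop

lemma measurable_F : Measurable F := Measurable.limsup measurable_avg

def g0 (y : ℝ) : ℝ :=
  if 0 < y ∧ y < 1 then Real.sin (π * (y - 1/2)) / Real.cos (π * (y - 1/2)) else 0

lemma measurable_g0 : Measurable g0 := by
  unfold g0
  have hm : Measurable fun y : ℝ => π * (y - 1/2) :=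
    measurable_const.mul (measurable_id.sub_const _)
  exact Measurable.ite
    (measurableSet_Ioi.inter measurableSet_Iio)
    ((Real.continuous_sin.measurable.comp hm).div (Real.continuous_cos.measurable.comp hm))
    measurable_const

def phi (x : ℝ) : ℝ := g0 (F x)

lemma measurable_phi : Measurable phi := measurable_g0.comp measurable_F

def u (y : ℝ) (j : ℕ) : ℤ := ⌊((j : ℝ) + 1) * y⌋ - ⌊(j : ℝ) * y⌋

lemma u_nonneg {y : ℝ} (hy0 : 0 ≤ y) (j : ℕ) : 0 ≤ u y j := by
  have : (j : ℝ) * y ≤ ((j : ℝ) + 1) * y := by nlinarith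
  simpa [u] using Int.floor_le_floor this

lemma u_le_one {y : ℝ} (hy1 : y ≤ 1) (j : ℕ) : u y j ≤ 1 := by
  have h1 : ((j : ℝ) + 1) * y ≤ (j : ℝ) * y + 1 := by nlinarith
  have h2 : ⌊((j : ℝ) + 1) * y⌋ ≤ ⌊(j : ℝ) * y + 1⌋ := Int.floor_le_floor h1
  rw [Int.floor_add_one] at h2
  unfold u; omega

lemma u_sum (y : ℝ) (J : ℕ) : ∑ j ∈ Finset.range J, u y j = ⌊(J : ℝ) * y⌋ := by
  have := Finset.sum_range_sub (fun j : ℕ => ⌊(j : ℝ) * y⌋) J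
  simp only [u] at *
  convert this using 2
  · push_cast; ring_nf
  · simp

lemma u_zero_exists {y : ℝ} (hy0 : 0 ≤ y) (hy1 : y < 1) (J : ℕ) :
    ∃ i, J ≤ i ∧ u y i = 0 := by
  by_contra h
  push_neg at h
  have hone : ∀ i, J ≤ i → u y i = 1 := fun i hi => by
    have := h i hi; have := u_nonneg hy0 i; have := u_le_one hy1.le i; omega
  obtain ⟨K, hK⟩ := exists_nat_gt ((J : ℝ) / (1 - y))
  have hsum : ∑ j ∈ Finset.range (J + K), u y j =
      (∑ j ∈ Finset.range J, u y j) + K := by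
    rw [Finset.sum_range_add]
    congr 1
    rw [Finset.sum_congr rfl (fun i _ => hone (J + i) (Nat.le_add_right _ _))]
    simp
  have h0 : (0 : ℤ) ≤ ∑ j ∈ Finset.range J, u y j :=
    Finset.sum_nonneg fun j _ => u_nonneg hy0 j
  have hfl : (K : ℤ) ≤ ⌊((J + K : ℕ) : ℝ) * y⌋ := by
    rw [← u_sum, hsum]; omega
  have hle : (K : ℝ) ≤ ((J : ℝ) + K) * y := by
    have h2 := Int.floor_le (((J + K : ℕ) : ℝ) * y)
    have h3 : (K : ℝ) ≤ (⌊((J + K : ℕ) : ℝ) * y⌋ : ℝ) := by exact_mod_cast hfl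
    push_cast at h2 h3
    linarith
  have h1y : 0 < 1 - y := by linarith
  rw [div_lt_iff₀ h1y] at hK
  nlinarith [K.cast_nonneg (α := ℝ), J.cast_nonneg (α := ℝ)]

lemma u_real_nonneg {y : ℝ} (hy0 : 0 ≤ y) (j : ℕ) : (0:ℝ) ≤ (u y j : ℝ) := by
  exact_mod_cast u_nonneg hy0 j

lemma u_real_le_one {y : ℝ} (hy1 : y ≤ 1) (j : ℕ) : (u y j : ℝ) ≤ 1 := by
  exact_mod_cast u_le_one hy1 j

lemma summable_u {y : ℝ} (hy0 : 0 ≤ y) (hy1 : y ≤ 1) :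
    Summable fun i => (u y i : ℝ) * (1/2)^i := by
  apply Summable.of_nonneg_of_le
    (fun i => mul_nonneg (u_real_nonneg hy0 i) (by positivity))
    (fun i => ?_) summable_geometric_two
  calc (u y i : ℝ) * (1/2)^i ≤ 1 * (1/2)^i := by
        apply mul_le_mul_of_nonneg_right (u_real_le_one hy1 i) (by positivity)
    _ = (1/2)^i := one_mul _

lemma pow_split (a : ℤ) (p : ℕ) (hp : 1 ≤ p) : a * 2^p = 2*(a*2^(p-1)) := by
  obtain ⟨k, rfl⟩ : ∃ k, p = k+1 := ⟨p-1, by omega⟩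
  simp [pow_succ]; ring

lemma dg_extract {y : ℝ} (hy0 : 0 ≤ y) (hy1 : y < 1) (N : ℕ) (m : ℤ) (j : ℕ) :
    dg (N+1+j) ((m:ℝ)/2^N + (∑' i, (u y i : ℝ) * (1/2)^i) / 2^(N+1)) = u y j := by
  set W := ∑' i, (u y i : ℝ) * (1/2)^i with hW
  set x := (m:ℝ)/2^N + W / 2^(N+1) with hx
  have hsum := summable_u hy0 hy1.le
  -- the shifted tail
  set r := ∑' i, (u y (i+(j+1)) : ℝ) * (1/2)^(i+1) with hr
  set S := ∑ i ∈ Finset.range (j+1), u y i * 2^(j-i) with hS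
  -- main algebraic identity
  have hsum2 : Summable fun i => (u y i : ℝ) * (1/2)^i * 2^j := hsum.mul_right _
  have key : x * 2^(N+1+j) = r + ((m * 2^(j+1) + S : ℤ) : ℝ) := by
    have h1 : (m:ℝ)/2^N * 2^(N+1+j) = (m:ℝ) * 2^(j+1) := by
      rw [show N+1+j = N + (j+1) by omega, pow_add]
      field_simp
    have h2 : W / 2^(N+1) * 2^(N+1+j) = W * 2^j := by
      rw [show N+1+j = (N+1) + j by omega, pow_add]
      field_simp
      ring
    have h3 : W * 2^j = ((S:ℤ):ℝ) + r := by
      rw [hW, ← tsum_mul_right]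
      rw [← Summable.sum_add_tsum_nat_add (j+1) hsum2]
      congr 1
      · push_cast [hS]
        apply Finset.sum_congr rfl
        intro i hi
        have hij : i ≤ j := by simpa using Nat.lt_succ_iff.mp (Finset.mem_range.mp hi)
        have hadd : i + (j - i) = j := by omega
        have : (1/2:ℝ)^i * 2^j = 2^(j-i) :=
          calc (1/2:ℝ)^i * 2^j = (1/2)^i * (2^i * 2^(j-i)) := by rw [← pow_add, hadd]
            _ = 2^(j-i) := by
                rw [one_div, inv_pow, ← mul_assoc,
                  inv_mul_cancel₀ (by positivity : ((2:ℝ)^i) ≠ 0), one_mul]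
        rw [mul_assoc, this]
      · rw [hr]
        apply tsum_congr
        intro i
        have : (1/2:ℝ)^(i+(j+1)) * 2^j = (1/2)^(i+1) := by
          rw [show i+(j+1) = (i+1)+j by omega, pow_add, mul_assoc, one_div, inv_pow (2:ℝ) j,
            inv_mul_cancel₀ (by positivity : ((2:ℝ)^j) ≠ 0), mul_one]
        rw [mul_assoc, this]
    calc x * 2^(N+1+j) = (m:ℝ)/2^N * 2^(N+1+j) + W / 2^(N+1) * 2^(N+1+j) := by
          rw [hx]; ring
      _ = (m:ℝ) * 2^(j+1) + (((S:ℤ):ℝ) + r) := by rw [h1, h2, h3]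
      _ = r + ((m * 2^(j+1) + S : ℤ) : ℝ) := by push_cast; ring
  -- bounds on r
  have hsumr : Summable fun i => (u y (i+(j+1)) : ℝ) * (1/2)^(i+1) := by
    apply Summable.of_nonneg_of_le
      (fun i => mul_nonneg (u_real_nonneg hy0 _) (by positivity))
      (fun i => ?_) (summable_geometric_two.mul_left (1/2))
    calc (u y (i+(j+1)) : ℝ) * (1/2)^(i+1) ≤ 1 * (1/2)^(i+1) :=
          mul_le_mul_of_nonneg_right (u_real_le_one hy1.le _) (by positivity)
      _ = 1/2 * (1/2)^i := by rw [one_mul, pow_succ]; ring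
  have hr0 : 0 ≤ r :=
    tsum_nonneg fun i => mul_nonneg (u_real_nonneg hy0 _) (by positivity)
  have hr1 : r < 1 := by
    obtain ⟨i₀, hi₀, hu₀⟩ := u_zero_exists hy0 hy1 (j+1)
    set k₀ := i₀ - (j+1) with hk₀
    have hk : k₀ + (j+1) = i₀ := by omega
    have hsumg : Summable fun i : ℕ => (1/2:ℝ)^(i+1) := by
      have := summable_geometric_two.mul_left (1/2 : ℝ)
      apply this.congr; intro i; rw [pow_succ]; ring
    have hsumite : Summable fun i : ℕ => if i = k₀ then 0 else (1/2:ℝ)^(i+1) := by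
      apply Summable.of_nonneg_of_le (fun i => ?_) (fun i => ?_) hsumg
      · split_ifs <;> positivity
      · split_ifs
        · positivity
        · exact le_rfl
    have hle : r ≤ ∑' i, if i = k₀ then 0 else (1/2:ℝ)^(i+1) := by
      apply Summable.tsum_le_tsum _ hsumr hsumite
      intro i
      by_cases hik : i = k₀
      · simp [hik, hk, hu₀]
      · simp only [hik, if_false]
        calc (u y (i+(j+1)) : ℝ) * (1/2)^(i+1) ≤ 1 * (1/2)^(i+1) :=
              mul_le_mul_of_nonneg_right (u_real_le_one hy1.le _) (by positivity)
          _ = (1/2)^(i+1) := one_mul _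
    have hgeo : ∑' i : ℕ, (1/2:ℝ)^(i+1) = 1 := by
      have h := tsum_geometric_two' 1
      calc ∑' i : ℕ, (1/2:ℝ)^(i+1) = ∑' i : ℕ, 1/2/2^i := by
            apply tsum_congr; intro i
            rw [pow_succ, div_pow, one_pow]; ring
        _ = 1 := h
    have hsplit := Summable.tsum_eq_add_tsum_ite hsumg k₀
    rw [hgeo] at hsplit
    have : ∑' i, (if i = k₀ then 0 else (1/2:ℝ)^(i+1)) = 1 - (1/2)^(k₀+1) := by
      linarith
    rw [this] at hle
    have : (0:ℝ) < (1/2)^(k₀+1) := by positivity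
    linarith
  -- compute the floor
  have hfloor : ⌊x * 2^(N+1+j)⌋ = m * 2^(j+1) + S := by
    rw [key, Int.floor_add_intCast, Int.floor_eq_zero_iff.mpr ⟨hr0, hr1⟩, zero_add]
  -- compute mod 2
  have hSdec : S = 2 * (∑ i ∈ Finset.range j, u y i * 2^(j-i-1)) + u y j := by
    rw [hS, Finset.sum_range_succ, Nat.sub_self, pow_zero, mul_one]
    congr 1
    rw [Finset.mul_sum]
    apply Finset.sum_congr rfl
    intro i hi
    have hik : i < j := Finset.mem_range.mp hi
    exact pow_split (u y i) (j-i) (by omega)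
  have hu0 := u_nonneg hy0 j
  have hu1 := u_le_one hy1.le j
  have hm2 : m * 2^(j+1) = 2 * (m * 2^j) := by rw [pow_succ]; ring
  unfold dg
  rw [hfloor, hSdec, hm2]
  omega

lemma F_attains {a b y : ℝ} (hab : a < b) (hy0 : 0 < y) (hy1 : y < 1) :
    ∃ x ∈ Ioo a b, F x = y := by
  -- choose the dyadic scale
  obtain ⟨N, hN⟩ := pow_unbounded_of_one_lt (2/(b-a)) (one_lt_two (α := ℝ))
  have hba : 0 < b - a := by linarith
  have hpowN : (0:ℝ) < 2^N := by positivity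
  have h2N : 2/2^N < b - a := by
    rw [div_lt_iff₀ hba] at hN
    rw [div_lt_iff₀ hpowN]
    nlinarith
  set m : ℤ := ⌊a * 2^N⌋ + 1 with hm
  set W := ∑' i, (u y i : ℝ) * (1/2)^i with hWdef
  set x := (m:ℝ)/2^N + W / 2^(N+1) with hxdef
  have hsum := summable_u hy0.le hy1.le
  have hW0 : 0 ≤ W :=
    tsum_nonneg fun i => mul_nonneg (u_real_nonneg hy0.le i) (by positivity)
  have hW2 : W ≤ 2 := by
    have h2 : ∑' i : ℕ, ((1:ℝ)/2)^i = 2 := tsum_geometric_two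
    rw [← h2]
    apply Summable.tsum_le_tsum _ hsum summable_geometric_two
    intro i
    calc (u y i : ℝ) * (1/2)^i ≤ 1 * (1/2)^i :=
          mul_le_mul_of_nonneg_right (u_real_le_one hy1.le i) (by positivity)
      _ = (1/2)^i := one_mul _
  have hq1 : a < (m:ℝ)/2^N := by
    rw [lt_div_iff₀ hpowN]
    have := Int.lt_floor_add_one (a * 2^N)
    push_cast [hm]
    linarith
  have hq2 : (m:ℝ)/2^N ≤ a + 1/2^N := by
    rw [div_le_iff₀ hpowN]
    have h1 := Int.floor_le (a * 2^N)
    have h2 : (a + 1/2^N) * 2^N = a*2^N + 1 := by field_simp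
    push_cast [hm]
    linarith
  have hxa : a < x := by
    rw [hxdef]
    have : 0 ≤ W / 2^(N+1) := by positivity
    linarith
  have hxb : x < b := by
    have hW' : W / 2^(N+1) ≤ 1/2^N := by
      rw [div_le_div_iff₀ (by positivity) hpowN, pow_succ]
      nlinarith
    rw [hxdef]
    have : (2:ℝ)/2^N = 1/2^N + 1/2^N := by ring
    linarith
  refine ⟨x, ⟨hxa, hxb⟩, ?_⟩
  -- digits of x beyond N+1 are the u-digits
  have hd : ∀ j, dg (N+1+j) x = u y j := fun j => dg_extract hy0.le hy1 N m j
  -- the Cesàro averages tend to y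
  set C₀ := ∑ k ∈ Finset.range (N+1), ((dg k x : ℤ) : ℝ) with hC₀
  have hC₀0 : 0 ≤ C₀ :=
    Finset.sum_nonneg fun k _ => by exact_mod_cast dg_nonneg k x
  have hC₀1 : C₀ ≤ N+1 := by
    calc C₀ ≤ ∑ k ∈ Finset.range (N+1), (1:ℝ) :=
          Finset.sum_le_sum fun k _ => by exact_mod_cast dg_le_one k x
      _ = N+1 := by simp
  have hsum_eq : ∀ M : ℕ, ∑ k ∈ Finset.range (N+1+M), ((dg k x : ℤ) : ℝ)
      = C₀ + ((⌊(M:ℝ) * y⌋ : ℤ) : ℝ) := by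
    intro M
    rw [Finset.sum_range_add]
    congr 1
    have : ∀ i ∈ Finset.range M, ((dg (N+1+i) x : ℤ) : ℝ) = ((u y i : ℤ) : ℝ) :=
      fun i _ => by rw [hd i]
    rw [Finset.sum_congr rfl this, ← Int.cast_sum, u_sum]
  have htend : Tendsto (fun n => avg n x) atTop (𝓝 y) := by
    rw [← tendsto_sub_nhds_zero_iff]
    apply squeeze_zero_norm' (a := fun n : ℕ => (2*N+4)/n)
    · filter_upwards [eventually_ge_atTop (N+2)] with n hn
      have hn1 : (1:ℝ) ≤ n := by exact_mod_cast Nat.one_le_iff_ne_zero.mpr (by omega)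
      have hnpos : (0:ℝ) < n := by linarith
      set M := n - (N+1) with hM
      have hnM : n = N+1+M := by omega
      have hMr : (M:ℝ) = (n:ℝ) - (N+1) := by
        rw [hM]; push_cast [Nat.cast_sub (by omega : N+1 ≤ n)]; ring
      have havg : avg n x = (C₀ + ((⌊(M:ℝ) * y⌋ : ℤ) : ℝ))/n := by
        rw [avg, hnM, hsum_eq M, ← hnM]
      rw [havg]
      rw [div_sub' (ne_of_gt hnpos)]
      rw [Real.norm_eq_abs, abs_div, abs_of_pos hnpos, div_le_div_iff_of_pos_right hnpos]
      have hf1 := Int.floor_le ((M:ℝ) * y)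
      have hf2 := Int.lt_floor_add_one ((M:ℝ) * y)
      have hMy : (M:ℝ) * y = (n:ℝ) * y - (N+1) * y := by rw [hMr]; ring
      have hNy0 : 0 ≤ ((N:ℝ)+1) * y := by positivity
      have hNcast : (0:ℝ) ≤ (N:ℝ) := Nat.cast_nonneg N
      have hNy1 : ((N:ℝ)+1) * y ≤ (N:ℝ)+1 := by nlinarith
      have h3 : (n:ℝ) * y = (M:ℝ)*y + ((N:ℝ)+1)*y := by rw [hMy]; ring
      rw [abs_le]
      constructor
      · linarith
      · linarith
    · exact tendsto_const_div_atTop_nhds_zero_nat _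
  exact htend.limsup_eq

lemma phi_surjOn {a b : ℝ} (hab : a < b) (z : ℝ) : ∃ x ∈ Ioo a b, phi x = z := by
  set y := 1/2 + Real.arctan z / π with hy
  have hπ := Real.pi_pos
  have ha1 := Real.arctan_lt_pi_div_two z
  have ha2 := Real.neg_pi_div_two_lt_arctan z
  have hy0 : 0 < y := by
    rw [hy]
    have : -(1/2 : ℝ) < Real.arctan z / π := by
      rw [lt_div_iff₀ hπ]
      nlinarith
    linarith
  have hy1 : y < 1 := by
    rw [hy]
    have : Real.arctan z / π < 1/2 := by
      rw [div_lt_iff₀ hπ]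
      linarith
    linarith
  obtain ⟨x, hx, hFx⟩ := F_attains hab hy0 hy1
  refine ⟨x, hx, ?_⟩
  rw [phi, hFx, g0, if_pos ⟨hy0, hy1⟩]
  have harg : π * (y - 1/2) = Real.arctan z := by
    rw [hy]; field_simp; ring
  rw [harg, ← Real.tan_eq_sin_div_cos, Real.tan_arctan]

lemma phi_surj : Function.Surjective phi := fun z => by
  obtain ⟨x, _, hx⟩ := phi_surjOn (zero_lt_one (α := ℝ)) z
  exact ⟨x, hx⟩

lemma sinh_lim (S : Finset ℝ) (hpos : ∀ c ∈ S, 0 < c) (a : ℝ → ℝ) (c₀ : ℝ)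
    (hc₀ : c₀ ∈ S) (hmax : ∀ c ∈ S, c ≤ c₀) :
    Tendsto (fun t => (∑ c ∈ S, a c * Real.sinh (c * t)) * Real.exp (-(c₀ * t)))
      atTop (𝓝 (a c₀ / 2)) := by
  have heq : ∀ t, (∑ c ∈ S, a c * Real.sinh (c * t)) * Real.exp (-(c₀ * t))
      = ∑ c ∈ S, a c * ((Real.exp ((c - c₀) * t) - Real.exp (-((c + c₀) * t))) / 2) := by
    intro t
    rw [Finset.sum_mul]
    refine Finset.sum_congr rfl fun c hc => ?_
    rw [Real.sinh_eq, show (c - c₀) * t = c * t + -(c₀ * t) by ring,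
      show -((c + c₀) * t) = -(c * t) + -(c₀ * t) by ring, Real.exp_add, Real.exp_add]
    ring
  have hterm : ∀ c ∈ S, Tendsto
      (fun t => a c * ((Real.exp ((c - c₀) * t) - Real.exp (-((c + c₀) * t))) / 2))
      atTop (𝓝 (if c = c₀ then a c₀ / 2 else 0)) := by
    intro c hc
    have h2 : Tendsto (fun t => Real.exp (-((c + c₀) * t))) atTop (𝓝 0) := by
      apply Real.tendsto_exp_atBot.comp
      have hcc : 0 < c + c₀ := by
        have := hpos c hc; have := hpos c₀ hc₀; linarith
      have hg : Tendsto (fun t : ℝ => -((c + c₀) * t)) atTop atBot := by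
        have := (tendsto_const_mul_atBot_of_neg (f := fun t : ℝ => t) (l := atTop)
          (by linarith : -(c + c₀) < 0)).mpr tendsto_id
        exact this.congr fun t => by ring
      exact hg
    by_cases hcase : c = c₀
    · subst hcase
      have h1 : Tendsto (fun t : ℝ => Real.exp ((c - c) * t)) atTop (𝓝 1) := by
        simp [Real.exp_zero]
      have := ((h1.sub h2).div_const 2).const_mul (a c)
      simpa [div_eq_mul_inv] using this
    · have hlt : c - c₀ < 0 := by
        have := hmax c hc
        rcases lt_or_eq_of_le this with h | h
        · linarith
        · exact absurd h hcase
      have h1 : Tendsto (fun t => Real.exp ((c - c₀) * t)) atTop (𝓝 0) := by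
        apply Real.tendsto_exp_atBot.comp
        exact (tendsto_const_mul_atBot_of_neg (f := fun t : ℝ => t) (l := atTop) hlt).mpr tendsto_id
      have := ((h1.sub h2).div_const 2).const_mul (a c)
      simpa [hcase] using this
  have hsum := tendsto_finset_sum S hterm
  rw [Finset.sum_ite_eq' S c₀ (fun _ => a c₀ / 2)] at hsum
  simp only [hc₀, if_true] at hsum
  apply Tendsto.congr (fun t => (heq t).symm) hsum

lemma combo_tendsto_atTop (S : Finset ℝ) (hpos : ∀ c ∈ S, 0 < c) (a : ℝ → ℝ) (c₀ : ℝ)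
    (hc₀ : c₀ ∈ S) (hmax : ∀ c ∈ S, c ≤ c₀) (ha : 0 < a c₀) :
    Tendsto (fun t => ∑ c ∈ S, a c * Real.sinh (c * t)) atTop atTop := by
  have h1 := sinh_lim S hpos a c₀ hc₀ hmax
  have h2 : Tendsto (fun t : ℝ => Real.exp (c₀ * t)) atTop atTop :=
    Real.tendsto_exp_atTop.comp (tendsto_id.const_mul_atTop (hpos c₀ hc₀))
  have h3 := Filter.Tendsto.pos_mul_atTop (by linarith : 0 < a c₀ / 2) h1 h2
  apply h3.congr
  intro t
  rw [mul_assoc, ← Real.exp_add]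
  simp

lemma combo_surjective (S : Finset ℝ) (hpos : ∀ c ∈ S, 0 < c) (a : ℝ → ℝ)
    (hS : S.Nonempty) (hne : a (S.max' hS) ≠ 0) :
    Function.Surjective (fun t => ∑ c ∈ S, a c * Real.sinh (c * t)) := by
  set c₀ := S.max' hS with hc₀def
  have hc₀ : c₀ ∈ S := S.max'_mem hS
  have hmax : ∀ c ∈ S, c ≤ c₀ := fun c hc => S.le_max' c hc
  have hcont : Continuous (fun t => ∑ c ∈ S, a c * Real.sinh (c * t)) := by
    apply continuous_finset_sum
    intro c _
    exact continuous_const.mul (Real.continuous_sinh.comp (continuous_const.mul continuous_id))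
  have hodd : ∀ t, (∑ c ∈ S, a c * Real.sinh (c * (-t)))
      = -(∑ c ∈ S, a c * Real.sinh (c * t)) := by
    intro t
    rw [← Finset.sum_neg_distrib]
    exact Finset.sum_congr rfl fun c _ => by rw [mul_neg, Real.sinh_neg]; ring
  rcases hne.lt_or_gt with hneg | hpos'
  · -- top coefficient negative: apply the positive case to `-a`
    have hsurj' : Function.Surjective (fun t => ∑ c ∈ S, (-a c) * Real.sinh (c * t)) := by
      have hT : Tendsto (fun t => ∑ c ∈ S, (-a c) * Real.sinh (c * t)) atTop atTop :=
        combo_tendsto_atTop S hpos (fun c => -a c) c₀ hc₀ hmax (by show (0:ℝ) < -a c₀; linarith)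
      have hcont' : Continuous (fun t => ∑ c ∈ S, (-a c) * Real.sinh (c * t)) := by
        apply continuous_finset_sum
        intro c _
        exact continuous_const.mul (Real.continuous_sinh.comp (continuous_const.mul continuous_id))
      have hodd' : ∀ t, (∑ c ∈ S, (-a c) * Real.sinh (c * (-t)))
          = -(∑ c ∈ S, (-a c) * Real.sinh (c * t)) := by
        intro t
        rw [← Finset.sum_neg_distrib]
        exact Finset.sum_congr rfl fun c _ => by rw [mul_neg, Real.sinh_neg]; ring
      have hB : Tendsto (fun t => ∑ c ∈ S, (-a c) * Real.sinh (c * t)) atBot atBot := by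
        have := hT.comp tendsto_neg_atBot_atTop
        have h2 : Tendsto (fun t => -(∑ c ∈ S, (-a c) * Real.sinh (c * t))) atBot atTop :=
          this.congr fun t => hodd' t
        rw [tendsto_neg_atTop_iff] at h2
        exact h2
      exact hcont'.surjective hT hB
    intro z
    obtain ⟨t, ht⟩ := hsurj' (-z)
    refine ⟨t, ?_⟩
    simp only at ht ⊢
    have : ∑ c ∈ S, (-a c) * Real.sinh (c * t) = -∑ c ∈ S, a c * Real.sinh (c * t) := by
      rw [← Finset.sum_neg_distrib]
      exact Finset.sum_congr rfl fun c _ => by ring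
    rw [this] at ht
    linarith
  · have hT : Tendsto (fun t => ∑ c ∈ S, a c * Real.sinh (c * t)) atTop atTop :=
      combo_tendsto_atTop S hpos a c₀ hc₀ hmax hpos'
    have hB : Tendsto (fun t => ∑ c ∈ S, a c * Real.sinh (c * t)) atBot atBot := by
      have := hT.comp tendsto_neg_atBot_atTop
      have h2 : Tendsto (fun t => -(∑ c ∈ S, a c * Real.sinh (c * t))) atBot atTop :=
        this.congr fun t => hodd t
      rw [tendsto_neg_atTop_iff] at h2
      exact h2
    exact hcont.surjective hT hB

def sFun (c : Ioi (0:ℝ)) : ℝ → ℝ := fun x => Real.sinh ((c : ℝ) * phi x)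

def coeff (l : Ioi (0:ℝ) →₀ ℝ) : ℝ → ℝ := fun c =>
  if h : 0 < c then l ⟨c, h⟩ else 0

lemma supp_pos (l : Ioi (0:ℝ) →₀ ℝ) : ∀ c ∈ l.support.image Subtype.val, 0 < c := by
  intro c hc
  obtain ⟨i, _, rfl⟩ := Finset.mem_image.mp hc
  exact i.2

lemma coeff_apply (l : Ioi (0:ℝ) →₀ ℝ) (i : Ioi (0:ℝ)) : coeff l (i : ℝ) = l i := by
  have h : (0:ℝ) < ↑i := i.2
  simp only [coeff, dif_pos h]

lemma sum_image_eq (l : Ioi (0:ℝ) →₀ ℝ) (t : ℝ) :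
    ∑ c ∈ l.support.image Subtype.val, coeff l c * Real.sinh (c * t)
      = ∑ i ∈ l.support, l i * Real.sinh ((i : ℝ) * t) := by
  rw [Finset.sum_image (f := fun c => coeff l c * Real.sinh (c * t))
    (fun i _ j _ h => Subtype.ext h)]
  exact Finset.sum_congr rfl fun i _ => by rw [coeff_apply]

lemma finsupp_apply_eval (l : Ioi (0:ℝ) →₀ ℝ) (x : ℝ) :
    (l.sum fun i a => a • sFun i) x = ∑ i ∈ l.support, l i * Real.sinh ((i : ℝ) * phi x) := by
  rw [Finsupp.sum]
  rw [Finset.sum_apply]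
  exact Finset.sum_congr rfl fun i _ => rfl

lemma coeff_ne_zero (l : Ioi (0:ℝ) →₀ ℝ) {c : ℝ} (hc : c ∈ l.support.image Subtype.val) :
    coeff l c ≠ 0 := by
  obtain ⟨i, hi, rfl⟩ := Finset.mem_image.mp hc
  rw [coeff_apply]
  exact Finsupp.mem_support_iff.mp hi

lemma sFun_li : LinearIndependent ℝ sFun := by
  rw [linearIndependent_iff]
  intro l hl
  by_contra hlne
  have hsupp : l.support.Nonempty := by
    rw [Finset.nonempty_iff_ne_empty]
    intro h
    exact hlne (Finsupp.support_eq_empty.mp h)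
  set S := l.support.image Subtype.val with hSdef
  have hS : S.Nonempty := hsupp.image _
  -- the function h vanishes identically
  have hzero : ∀ t : ℝ, (∑ c ∈ S, coeff l c * Real.sinh (c * t)) = 0 := by
    intro t
    obtain ⟨x, hx⟩ := phi_surj t
    have := congrFun (congrArg (fun v => (v : ℝ → ℝ)) hl) x
    rw [Finsupp.linearCombination_apply] at this
    have heval := finsupp_apply_eval l x
    rw [sum_image_eq, ← hx]
    calc ∑ i ∈ l.support, l i * Real.sinh ((i : ℝ) * phi x)
        = (l.sum fun i a => a • sFun i) x := (finsupp_apply_eval l x).symm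
      _ = 0 := by simpa using this
  set c₀ := S.max' hS with hc₀def
  have hc₀ : c₀ ∈ S := S.max'_mem hS
  have hmax : ∀ c ∈ S, c ≤ c₀ := fun c hc => S.le_max' c hc
  have hlim := sinh_lim S (supp_pos l) (coeff l) c₀ hc₀ hmax
  have hlim0 : Tendsto (fun t => (∑ c ∈ S, coeff l c * Real.sinh (c * t))
      * Real.exp (-(c₀ * t))) atTop (𝓝 0) := by
    have : (fun t => (∑ c ∈ S, coeff l c * Real.sinh (c * t)) * Real.exp (-(c₀ * t)))
        = fun _ => 0 := by
      funext t; rw [hzero t, zero_mul]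
    rw [this]
    exact tendsto_const_nhds
  have := tendsto_nhds_unique hlim hlim0
  have hc := coeff_ne_zero l hc₀
  apply hc
  linarith

def M : Submodule ℝ (ℝ → ℝ) := Submodule.span ℝ (Set.range sFun)

lemma rank_M : Module.rank ℝ M = Cardinal.continuum := by
  rw [M, rank_span sFun_li, Cardinal.mk_range_eq sFun sFun_li.injective,
    Cardinal.mk_Ioi_real]

theorem main :
    ∃ M : Submodule ℝ (ℝ → ℝ), Module.rank ℝ M = Cardinal.continuum ∧
      ∀ f ∈ M, f ≠ 0 → Measurable f ∧ EverywhereSurjective f := by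
  refine ⟨M, rank_M, ?_⟩
  intro f hf hfne
  rw [M, Finsupp.mem_span_range_iff_exists_finsupp] at hf
  obtain ⟨l, hl⟩ := hf
  set S := l.support.image Subtype.val with hSdef
  have hS : S.Nonempty := by
    rw [Finset.nonempty_iff_ne_empty]
    intro h
    apply hfne
    have : l.support = ∅ := Finset.image_eq_empty.mp h
    have : l = 0 := Finsupp.support_eq_empty.mp this
    rw [← hl, this]
    simp
  set h : ℝ → ℝ := fun t => ∑ c ∈ S, coeff l c * Real.sinh (c * t) with hhdef
  have hcomp : ∀ x, f x = h (phi x) := by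
    intro x
    have hrfl : h (phi x) = ∑ c ∈ S, coeff l c * Real.sinh (c * phi x) := rfl
    rw [hrfl, sum_image_eq l (phi x), ← finsupp_apply_eval l x, ← hl]
  have hsurj : Function.Surjective h := by
    apply combo_surjective S (supp_pos l) (coeff l) hS
    exact coeff_ne_zero l (S.max'_mem hS)
  constructor
  · have hcont : Continuous h := by
      apply continuous_finset_sum
      intro c _
      exact continuous_const.mul (Real.continuous_sinh.comp (continuous_const.mul continuous_id))
    have : f = h ∘ phi := funext hcomp
    rw [this]
    exact hcont.measurable.comp measurable_phi
  · intro a b hab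
    apply Set.eq_univ_iff_forall.mpr
    intro z
    obtain ⟨t, ht⟩ := hsurj z
    obtain ⟨x, hx, hphix⟩ := phi_surjOn hab t
    exact ⟨x, hx, by rw [hcomp x, hphix, ht]⟩

end ES4
end

theorem stmt_4 :
    ∃ M : Submodule ℝ (ℝ → ℝ), Module.rank ℝ M = Cardinal.continuum ∧
      ∀ f ∈ M, f ≠ 0 → Measurable f ∧ EverywhereSurjective f :=
  ES4.main
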